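/- For every integrable random variable X on an atomless probability space and every α ∈ (0,1), the set of minimizers over t ∈ ℝ of the function t ↦ t + (1/(1−α))·E[(X − t)_+] is exactly the closed interval [VaR⁻_α(X), VaR⁺_α(X)]. -/

import Mathlib

open MeasureTheory Set

/-- An atomless measure: every set of nonzero measure can be split nontrivially. -/
def Atomless {Ω : Type*} [MeasurableSpace Ω] (μ : Measure Ω) : Prop :=
  ∀ A : Set Ω, MeasurableSet A → μ A ≠ 0 →
    ∃ B ⊆ A, MeasurableSet B ∧ μ B ≠ 0 ∧ μ B ≠ μ A

/-- Left quantile (lower Value-at-Risk) of `X` at level `α`: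
`VaR⁻_α(X) = inf {t : ℙ(X ≤ t) ≥ α}`. -/
noncomputable def VaRminus {Ω : Type*} [MeasurableSpace Ω] (μ : Measure Ω) (X : Ω → ℝ)
    (α : ℝ) : ℝ :=
  sInf {t : ℝ | ENNReal.ofReal α ≤ μ {ω | X ω ≤ t}}

/-- Right quantile (upper Value-at-Risk) of `X` at level `α`:
`VaR⁺_α(X) = inf {t : ℙ(X ≤ t) > α}`. -/
noncomputable def VaRplus {Ω : Type*} [MeasurableSpace Ω] (μ : Measure Ω) (X : Ω → ℝ)
    (α : ℝ) : ℝ :=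
  sInf {t : ℝ | ENNReal.ofReal α < μ {ω | X ω ≤ t}}

section ESAux

variable {Ω : Type*} [MeasurableSpace Ω] {μ : Measure Ω} [IsProbabilityMeasure μ] {X : Ω → ℝ}

private lemma tail_antitone (X : Ω → ℝ) :
    Antitone (fun t : ℝ => μ {ω | t < X ω}) :=
  fun a b hab => measure_mono (fun ω (h : b < X ω) => lt_of_le_of_lt hab h)

private lemma tail_mble (X : Ω → ℝ) :
    Measurable (fun t : ℝ => μ {ω | t < X ω}) :=
  (tail_antitone X).measurable

private lemma layer_eq (hXmeas : Measurable X) (r : ℝ) :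
    ∫⁻ ω, ENNReal.ofReal (max (X ω - r) 0) ∂μ = ∫⁻ t in Set.Ioi r, μ {ω | t < X ω} := by
  have hkey := lintegral_eq_lintegral_meas_lt (f := fun ω => max (X ω - r) 0) μ
    (Filter.Eventually.of_forall fun ω => le_max_right _ _)
    ((hXmeas.sub measurable_const).max measurable_const).aemeasurable
  rw [hkey]
  have hsets : ∀ t ∈ Set.Ioi (0 : ℝ),
      μ {a | t < max (X a - r) 0} = μ {a | t + r < X a} := by
    intro t ht
    congr 1
    ext a
    simp only [Set.mem_setOf_eq, lt_max_iff, lt_sub_iff_add_lt]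
    exact ⟨fun h => h.resolve_right (not_lt.mpr ht.le), Or.inl⟩
  rw [setLIntegral_congr_fun measurableSet_Ioi (fun t ht => hsets t ht)]
  have hmp := (measurePreserving_add_right (volume : Measure ℝ) r).setLIntegral_comp_preimage
    (measurableSet_Ioi : MeasurableSet (Set.Ioi r)) (tail_mble (μ := μ) X)
  have hpre : (fun x : ℝ => x + r) ⁻¹' Set.Ioi r = Set.Ioi 0 := by
    ext x; simp [Set.mem_Ioi]
  rw [hpre] at hmp
  exact hmp

private lemma integral_max_eq (hXmeas : Measurable X) (hXint : Integrable X μ) (r : ℝ) :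
    ∫ ω, max (X ω - r) 0 ∂μ = (∫⁻ t in Set.Ioi r, μ {ω | t < X ω}).toReal := by
  have hkey := integral_eq_lintegral_of_nonneg_ae (μ := μ) (f := fun ω => max (X ω - r) 0)
    (Filter.Eventually.of_forall fun ω => le_max_right _ _)
    ((hXmeas.sub measurable_const).max measurable_const).aestronglyMeasurable
  rw [← layer_eq hXmeas r, hkey]

private lemma tailint_ne_top (hXmeas : Measurable X) (hXint : Integrable X μ) (r : ℝ) :
    ∫⁻ t in Set.Ioi r, μ {ω | t < X ω} ≠ (⊤ : ENNReal) := by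
  rw [← layer_eq hXmeas r]
  exact ((hXint.sub (integrable_const r)).pos_part).lintegral_lt_top.ne

private lemma key_diff (hXmeas : Measurable X) (hXint : Integrable X μ) {s u : ℝ} (hsu : s ≤ u) :
    ∫ ω, max (X ω - s) 0 ∂μ - ∫ ω, max (X ω - u) 0 ∂μ
      = ∫ t in Set.Ioc s u, (μ {ω | t < X ω}).toReal := by
  have hdisj : Disjoint (Set.Ioc s u) (Set.Ioi u) :=
    Set.disjoint_left.mpr fun t ht ht' => not_le.mpr ht' ht.2
  have hsplit : ∫⁻ t in Set.Ioi s, μ {ω | t < X ω}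
      = (∫⁻ t in Set.Ioc s u, μ {ω | t < X ω}) + ∫⁻ t in Set.Ioi u, μ {ω | t < X ω} := by
    rw [← Set.Ioc_union_Ioi_eq_Ioi hsu, lintegral_union measurableSet_Ioi hdisj]
  have hfin : ∫⁻ t in Set.Ioi s, μ {ω | t < X ω} ≠ (⊤ : ENNReal) := tailint_ne_top hXmeas hXint s
  have hfin2 : ∫⁻ t in Set.Ioi u, μ {ω | t < X ω} ≠ (⊤ : ENNReal) := tailint_ne_top hXmeas hXint u
  have hfin1 : ∫⁻ t in Set.Ioc s u, μ {ω | t < X ω} ≠ (⊤ : ENNReal) := by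
    rw [hsplit] at hfin
    intro h
    rw [h] at hfin
    simp at hfin
  rw [integral_max_eq hXmeas hXint s, integral_max_eq hXmeas hXint u,
    integral_toReal ((tail_mble X).aemeasurable.restrict)
      (Filter.Eventually.of_forall fun t => measure_lt_top μ _),
    hsplit, ENNReal.toReal_add hfin1 hfin2]
  ring

private lemma tail_toReal (hXmeas : Measurable X) (t : ℝ) :
    (μ {ω | t < X ω}).toReal = 1 - (μ {ω | X ω ≤ t}).toReal := by
  have hc : {ω | t < X ω} = {ω | X ω ≤ t}ᶜ := by
    ext ω; simp [not_le]
  have hms : MeasurableSet {ω | X ω ≤ t} := hXmeas measurableSet_Iic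
  rw [hc, measure_compl hms (measure_ne_top μ _), measure_univ,
    ENNReal.toReal_sub_of_le prob_le_one ENNReal.one_ne_top, ENNReal.toReal_one]

end ESAux

/-- The set of minimizers over `t ∈ ℝ` of `t ↦ t + (1/(1-α)) E[(X - t)_+]` is exactly the
closed interval `[VaR⁻_α(X), VaR⁺_α(X)]`. -/
theorem ES_optimization_minimizers {Ω : Type*} [MeasurableSpace Ω] (μ : Measure Ω)
    [IsProbabilityMeasure μ] (hμ : Atomless μ) (X : Ω → ℝ)
    (hXmeas : Measurable X) (hXint : Integrable X μ)
    (α : ℝ) (hα : α ∈ Set.Ioo (0 : ℝ) 1) :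
    {s : ℝ | ∀ u : ℝ,
        s + (1 - α)⁻¹ * ∫ ω, max (X ω - s) 0 ∂μ ≤ u + (1 - α)⁻¹ * ∫ ω, max (X ω - u) 0 ∂μ}
      = Set.Icc (VaRminus μ X α) (VaRplus μ X α) := by
  obtain ⟨hα0, hα1⟩ := hα
  have h1α : (0 : ℝ) < 1 - α := by linarith
  have hcpos : (0 : ℝ) < (1 - α)⁻¹ := inv_pos.mpr h1α
  set F : ℝ → ℝ := fun t => (μ {ω | X ω ≤ t}).toReal with hFdef
  have hFmono : Monotone F := fun a b hab =>
    ENNReal.toReal_mono (measure_ne_top μ _)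
      (measure_mono fun ω (h : X ω ≤ a) => h.trans hab)
  have hFmble : Measurable F := hFmono.measurable
  -- integrability of F and of F - α on bounded intervals
  have hFint : ∀ a b : ℝ, IntegrableOn F (Set.Ioc a b) volume := by
    intro a b
    haveI : IsFiniteMeasure (volume.restrict (Set.Ioc a b)) :=
      ⟨by rw [Measure.restrict_apply_univ]; exact measure_Ioc_lt_top⟩
    refine Integrable.mono' (integrable_const 1) hFmble.aestronglyMeasurable
      (Filter.Eventually.of_forall fun t => ?_)
    rw [Real.norm_eq_abs, abs_of_nonneg ENNReal.toReal_nonneg]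
    have : (μ {ω | X ω ≤ t}) ≤ 1 := prob_le_one
    calc (μ {ω | X ω ≤ t}).toReal ≤ (1 : ENNReal).toReal :=
          ENNReal.toReal_mono ENNReal.one_ne_top this
      _ = 1 := ENNReal.toReal_one
  have hconst : ∀ (a b : ℝ) (c : ℝ), IntegrableOn (fun _ : ℝ => c) (Set.Ioc a b) volume :=
    fun a b c => (integrableOn_const_iff).mpr (Or.inr measure_Ioc_lt_top)
  have hφint : ∀ a b : ℝ, IntegrableOn (fun t => F t - α) (Set.Ioc a b) volume :=
    fun a b => (hFint a b).sub (hconst a b α)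
  have hvol : ∀ a b : ℝ, a ≤ b → (volume (Set.Ioc a b)).toReal = b - a := by
    intro a b hab
    rw [Real.volume_Ioc, ENNReal.toReal_ofReal (by linarith)]
  -- the key identity
  have key : ∀ s u : ℝ, s ≤ u →
      (u + (1 - α)⁻¹ * ∫ ω, max (X ω - u) 0 ∂μ)
        - (s + (1 - α)⁻¹ * ∫ ω, max (X ω - s) 0 ∂μ)
      = (1 - α)⁻¹ * ∫ t in Set.Ioc s u, (F t - α) := by
    intro s u hsu
    have hd := key_diff hXmeas hXint hsu
    have h2 : ∫ t in Set.Ioc s u, (μ {ω | t < X ω}).toReal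
        = ∫ t in Set.Ioc s u, (1 - F t) :=
      integral_congr_ae (Filter.Eventually.of_forall fun t => tail_toReal hXmeas t)
    have h3 : ∫ t in Set.Ioc s u, (1 - F t)
        = (u - s) - ∫ t in Set.Ioc s u, F t := by
      rw [integral_sub (hconst s u 1) (hFint s u), setIntegral_const, measureReal_def, hvol s u hsu]
      simp
    have h4 : ∫ t in Set.Ioc s u, (F t - α)
        = (∫ t in Set.Ioc s u, F t) - α * (u - s) := by
      rw [integral_sub (hFint s u) (hconst s u α), setIntegral_const, measureReal_def, hvol s u hsu,
        smul_eq_mul]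
      ring
    have hHsHu : (∫ ω, max (X ω - s) 0 ∂μ) - (∫ ω, max (X ω - u) 0 ∂μ)
        = (u - s) - ∫ t in Set.Ioc s u, F t := by
      rw [hd, h2, h3]
    have hc : (1 - α)⁻¹ * (1 - α) = 1 := inv_mul_cancel₀ h1α.ne'
    rw [h4]
    nlinarith [hHsHu, hc]
  -- the sets defining the quantiles
  set S : Set ℝ := {t : ℝ | ENNReal.ofReal α ≤ μ {ω | X ω ≤ t}} with hSdef
  set T : Set ℝ := {t : ℝ | ENNReal.ofReal α < μ {ω | X ω ≤ t}} with hTdef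
  -- T (hence S) is nonempty
  have hTne : T.Nonempty := by
    have hmono : Monotone (fun n : ℕ => {ω | X ω ≤ (n : ℝ)}) :=
      fun a b hab ω (h : X ω ≤ a) => h.trans (by exact_mod_cast hab)
    have htend := tendsto_measure_iUnion_atTop (μ := μ) hmono
    have hunion : ⋃ n : ℕ, {ω | X ω ≤ (n : ℝ)} = Set.univ := by
      ext ω
      simp only [Set.mem_iUnion, Set.mem_setOf_eq, Set.mem_univ, iff_true]
      obtain ⟨n, hn⟩ := exists_nat_ge (X ω)
      exact ⟨n, hn⟩
    rw [hunion, measure_univ] at htend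
    have hlt : ENNReal.ofReal α < 1 := by
      rw [← ENNReal.ofReal_one]
      exact ENNReal.ofReal_lt_ofReal_iff_of_nonneg hα0.le |>.mpr hα1
    obtain ⟨n, hn⟩ := (htend.eventually_const_lt hlt).exists
    exact ⟨(n : ℝ), hn⟩
  have hTsubS : T ⊆ S := by
    intro t ht
    have ht' : ENNReal.ofReal α < μ {ω | X ω ≤ t} := ht
    exact le_of_lt ht'
  have hSne : S.Nonempty := hTne.mono hTsubS
  -- lower bound for S (hence T)
  have hm : ∃ m : ℝ, μ {ω | X ω ≤ m} < ENNReal.ofReal α := by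
    have hanti : Antitone (fun n : ℕ => {ω | X ω ≤ -(n : ℝ)}) := by
      intro a b hab ω (h : X ω ≤ -(b : ℝ))
      exact h.trans (by simp; exact_mod_cast hab)
    have hnull : ∀ n : ℕ, NullMeasurableSet {ω | X ω ≤ -(n : ℝ)} μ :=
      fun n => (hXmeas measurableSet_Iic).nullMeasurableSet
    have htend := tendsto_measure_iInter_atTop (μ := μ) hnull hanti ⟨0, measure_ne_top μ _⟩
    have hinter : ⋂ n : ℕ, {ω | X ω ≤ -(n : ℝ)} = ∅ := by
      ext ω
      simp only [Set.mem_iInter, Set.mem_setOf_eq, Set.mem_empty_iff_false, iff_false, not_forall,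
        not_le]
      obtain ⟨n, hn⟩ := exists_nat_gt (-X ω)
      exact ⟨n, by linarith⟩
    rw [hinter, measure_empty] at htend
    have hpos : (0 : ENNReal) < ENNReal.ofReal α := ENNReal.ofReal_pos.mpr hα0
    obtain ⟨n, hn⟩ := (htend.eventually_lt_const hpos).exists
    exact ⟨-(n : ℝ), hn⟩
  have hbddS : BddBelow S := by
    obtain ⟨m, hm'⟩ := hm
    refine ⟨m, fun t ht => le_of_not_gt fun hlt => ?_⟩
    have : μ {ω | X ω ≤ t} ≤ μ {ω | X ω ≤ m} :=
      measure_mono fun ω (h : X ω ≤ t) => h.trans hlt.le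
    exact absurd ht (not_le.mpr (lt_of_le_of_lt this hm'))
  have hbddT : BddBelow T := hbddS.mono hTsubS
  ext s
  simp only [Set.mem_setOf_eq, Set.mem_Icc]
  constructor
  · intro hmin
    constructor
    · -- VaRminus ≤ s
      have hmem_all : ∀ t, s < t → t ∈ S := by
        intro t hst
        by_contra hc
        rw [hSdef, Set.mem_setOf_eq, not_le] at hc
        have hFt : F t < α :=
          (ENNReal.lt_ofReal_iff_toReal_lt (measure_ne_top μ _)).mp hc
        have hpos' := hmin t
        have hk := key s t hst.le
        have hI : 0 ≤ ∫ r in Set.Ioc s t, (F r - α) := by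
          by_contra hI
          push_neg at hI
          nlinarith [mul_neg_of_pos_of_neg hcpos hI]
        have hmonoI : ∫ r in Set.Ioc s t, (F r - α) ≤ ∫ _ in Set.Ioc s t, (F t - α) :=
          setIntegral_mono_on (hφint s t) (hconst s t _) measurableSet_Ioc
            (fun r hr => sub_le_sub_right (hFmono hr.2) α)
        rw [setIntegral_const, measureReal_def, hvol s t hst.le, smul_eq_mul] at hmonoI
        nlinarith [hmonoI, hI]
      by_contra hc
      push_neg at hc
      have hmid : s < (s + VaRminus μ X α) / 2 := by unfold VaRminus at hc ⊢; linarith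
      have hmem := hmem_all _ hmid
      have := csInf_le hbddS hmem
      unfold VaRminus at hc this
      rw [← hSdef] at hc this
      linarith
    · -- s ≤ VaRplus
      have hnotmem : ∀ t, t < s → μ {ω | X ω ≤ t} ≤ ENNReal.ofReal α := by
        intro t hts
        by_contra hc
        push_neg at hc
        have hFt : α < F t :=
          (ENNReal.ofReal_lt_iff_lt_toReal hα0.le (measure_ne_top μ _)).mp hc
        have hpos' := hmin t
        have hk := key t s hts.le
        have hI : ∫ r in Set.Ioc t s, (F r - α) ≤ 0 := by
          by_contra hI
          push_neg at hI
          nlinarith [mul_pos hcpos hI]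
        have hmonoI : ∫ _ in Set.Ioc t s, (F t - α) ≤ ∫ r in Set.Ioc t s, (F r - α) :=
          setIntegral_mono_on (hconst t s _) (hφint t s) measurableSet_Ioc
            (fun r hr => sub_le_sub_right (hFmono hr.1.le) α)
        rw [setIntegral_const, measureReal_def, hvol t s hts.le, smul_eq_mul] at hmonoI
        nlinarith [hmonoI, hI]
      refine le_csInf hTne fun t ht => le_of_not_gt fun hts => ?_
      exact absurd (show ENNReal.ofReal α < μ {ω | X ω ≤ t} from ht)
        (not_lt.mpr (hnotmem t hts))
  · rintro ⟨h1, h2⟩ u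
    rcases le_total s u with hsu | hus
    · have hk := key s u hsu
      have hI : 0 ≤ ∫ t in Set.Ioc s u, (F t - α) := by
        refine setIntegral_nonneg measurableSet_Ioc fun t ht => ?_
        have hst : VaRminus μ X α < t := lt_of_le_of_lt h1 ht.1
        unfold VaRminus at hst
        rw [← hSdef] at hst
        obtain ⟨t', ht'S, ht'lt⟩ := exists_lt_of_csInf_lt hSne hst
        have hαt' : α ≤ F t' :=
          (ENNReal.ofReal_le_iff_le_toReal (measure_ne_top μ _)).mp ht'S
        have := hFmono ht'lt.le
        simp only [sub_nonneg]
        linarith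
      nlinarith [mul_nonneg hcpos.le hI]
    · have hk := key u s hus
      have hae : ∀ᵐ t ∂(volume.restrict (Set.Ioc u s)), F t - α ≤ 0 := by
        have hne : ∀ᵐ t : ℝ ∂volume, t ≠ s := by
          rw [ae_iff]
          have : {a : ℝ | ¬a ≠ s} = {s} := by ext a; simp
          rw [this]
          exact measure_singleton s
        filter_upwards [ae_restrict_of_ae hne, ae_restrict_mem measurableSet_Ioc] with t hts htmem
        have hts' : t < s := lt_of_le_of_ne htmem.2 hts
        have hle : μ {ω | X ω ≤ t} ≤ ENNReal.ofReal α := by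
          by_contra hc
          push_neg at hc
          have htT : t ∈ T := hc
          have := csInf_le hbddT htT
          unfold VaRplus at h2
          rw [← hTdef] at h2
          linarith
        have : F t ≤ α := ENNReal.toReal_le_of_le_ofReal hα0.le hle
        linarith
      have hI : ∫ t in Set.Ioc u s, (F t - α) ≤ 0 := integral_nonpos_of_ae hae
      nlinarith [mul_nonneg hcpos.le (neg_nonneg.mpr hI)]
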